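/- Let X be a path-connected topological space and let Y be a locally path-connected topological space. If f : Y → X is continuous, then f is also continuous as a map from Y to P(X), where P(X) is X equipped with the Peano topology. -/

import Mathlib

open TopologicalSpace

/-- The Peano topology on `X`: generated by all path components of all open subsets. -/
def peanoTopology (X : Type*) [TopologicalSpace X] : TopologicalSpace X :=
  TopologicalSpace.generateFrom
    {C | ∃ (U : Set X) (x : X), IsOpen U ∧ x ∈ U ∧ C = pathComponentIn U x}

/-- The universal Peano space of `X`: the same underlying set with the Peano topology. -/
def Peanify (X : Type*) [TopologicalSpace X] : Type _ := X

instance (X : Type*) [TopologicalSpace X] : TopologicalSpace (Peanify X) :=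
  peanoTopology X

/-- The identity of the underlying set, viewed as a map `X → P(X)`. -/
def toPeanify (X : Type*) [TopologicalSpace X] : X → Peanify X := id

/-- a continuous map from a locally path-connected space `Y` to a
path-connected space `X` is continuous into the universal Peano space `P(X)`. -/
theorem continuous_toPeanify_comp {X Y : Type*} [TopologicalSpace X] [TopologicalSpace Y]
    [PathConnectedSpace X] [LocallyPathConnectedSpace Y] (f : Y → X) (hf : Continuous f) :
    Continuous (fun y => toPeanify X (f y)) := by
  refine continuous_generateFrom_iff.mpr ?_
  rintro C ⟨U, x, hU, hxU, rfl⟩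
  rw [isOpen_iff_mem_nhds]
  intro y hy
  have hfy : f y ∈ pathComponentIn U x := hy
  have hUn : U ∈ nhds (f y) := hU.mem_nhds (pathComponentIn_subset hfy)
  obtain ⟨V, ⟨hVn, hVpc⟩, hVU⟩ :=
    (path_connected_basis y).mem_iff.mp (hf.continuousAt.preimage_mem_nhds hUn)
  refine Filter.mem_of_superset hVn ?_
  intro z hz
  have himg : IsPathConnected (f '' V) := hVpc.image hf
  have : f '' V ⊆ pathComponentIn U (f y) :=
    himg.subset_pathComponentIn ⟨y, mem_of_mem_nhds hVn, rfl⟩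
      (Set.image_subset_iff.mpr hVU)
  have : f z ∈ pathComponentIn U (f y) := this ⟨z, hz, rfl⟩
  exact (pathComponentIn_congr hfy) ▸ this
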